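/- arXiv:2511.01349 — 4 statements merged into one kernel-verified Lean document; each statement's English description precedes it below -/
import Mathlib

section
/- For each nonzero ξ ∈ ℝⁿ and V₀ ≥ 0, the block matrix A(ξ) acting on ℂⁿ ⊕ ℂ, with upper-left block |ξ|²·Id + ξξᵀ (i.e. |ξ|² plus the rank-one operator v ↦ (ξ·v)ξ), upper-right block iξ, lower-left block −iξᵀ, and lower-right scalar block −V₀, is invertible, and its inverse is the block matrix with upper-left block (1/|ξ|²)·Id − ((V₀+1)/((2V₀+1)|ξ|⁴))·ξξᵀ, upper-right block (i/((2V₀+1)|ξ|²))·ξ, lower-left block −(i/((2V₀+1)|ξ|²))·ξᵀ, and lower-right scalar −2/(2V₀+1). -/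
open Complex

private lemma stokes_aux1 (q V d t x uu : ℂ) (hq : q ≠ 0) (hV : 2*V+1 ≠ 0) :
    q * (1/q * uu - (V+1)/((2*V+1)*q^2) * d * x + I/((2*V+1)*q) * t * x)
      + (1/q * d - (V+1)/((2*V+1)*q^2) * d * q + I/((2*V+1)*q) * t * q) * x
      + I * x * (-(I/((2*V+1)*q)) * d - 2/(2*V+1) * t) = uu := by
  have hD : q * ((2*V+1) * q ^ 2) * ((2*V+1) * q) ≠ 0 := by
    simp [hq, hV, pow_ne_zero]
  field_simp
  ring_nf
  simp only [Complex.I_sq]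
  have hV' : 1 + V*2 ≠ 0 := by rw [add_comm, mul_comm]; exact hV
  field_simp
  ring_nf

private lemma stokes_aux2 (q V d t : ℂ) (hq : q ≠ 0) (hV : 2*V+1 ≠ 0) :
    -I * (1/q * d - (V+1)/((2*V+1)*q^2) * d * q + I/((2*V+1)*q) * t * q)
      - V * (-(I/((2*V+1)*q)) * d - 2/(2*V+1) * t) = t := by
  have hD : q * ((2*V+1) * q ^ 2) * ((2*V+1) * q) ≠ 0 := by
    simp [hq, hV, pow_ne_zero]
  field_simp
  ring_nf
  simp only [Complex.I_sq]
  have hV' : 1 + V*2 ≠ 0 := by rw [add_comm, mul_comm]; exact hV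
  field_simp
  ring_nf

private lemma stokes_aux3 (q V d t x uu : ℂ) (hq : q ≠ 0) (hV : 2*V+1 ≠ 0) :
    1/q * (q*uu + d*x + I*x*t)
      - (V+1)/((2*V+1)*q^2) * (q*d + d*q + I*q*t) * x
      + I/((2*V+1)*q) * (-I*d - V*t) * x = uu := by
  have hD : q * ((2*V+1) * q ^ 2) * ((2*V+1) * q) ≠ 0 := by
    simp [hq, hV, pow_ne_zero]
  field_simp
  ring_nf
  simp only [Complex.I_sq]
  have hV' : 1 + V*2 ≠ 0 := by rw [add_comm, mul_comm]; exact hV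
  field_simp
  ring_nf

private lemma stokes_aux4 (q V d t : ℂ) (hq : q ≠ 0) (hV : 2*V+1 ≠ 0) :
    -(I/((2*V+1)*q)) * (q*d + d*q + I*q*t) - 2/(2*V+1) * (-I*d - V*t) = t := by
  have hD : q * ((2*V+1) * q ^ 2) * ((2*V+1) * q) ≠ 0 := by
    simp [hq, hV, pow_ne_zero]
  field_simp
  ring_nf
  simp only [Complex.I_sq]
  ring

/-- The `(s,t)`-principal symbol of the generalized Stokes operator, as a map on `ℂⁿ ⊕ ℂ`. -/
theorem stokes_symbol_invertible (n : ℕ) (ξ : Fin n → ℝ) (hξ : ξ ≠ 0)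
    (V₀ : ℝ) (hV₀ : 0 ≤ V₀) :
    ∀ u : (Fin n → ℂ) × ℂ,
      (let q : ℝ := ∑ i, ξ i ^ 2
       let dot : (Fin n → ℂ) → ℂ := fun v => ∑ i, (ξ i : ℂ) * v i
       -- the symbol A(ξ)
       let A : (Fin n → ℂ) × ℂ → (Fin n → ℂ) × ℂ := fun w =>
         (fun i => (q : ℂ) * w.1 i + dot w.1 * (ξ i : ℂ) + Complex.I * (ξ i : ℂ) * w.2,
          -Complex.I * dot w.1 - (V₀ : ℂ) * w.2)
       -- the claimed inverse B(ξ)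
       let B : (Fin n → ℂ) × ℂ → (Fin n → ℂ) × ℂ := fun w =>
         (fun i => ((1 / q : ℝ) : ℂ) * w.1 i
            - (((V₀ + 1) / ((2 * V₀ + 1) * q ^ 2) : ℝ) : ℂ) * dot w.1 * (ξ i : ℂ)
            + Complex.I / ((((2 * V₀ + 1) : ℝ) : ℂ) * (q : ℂ)) * w.2 * (ξ i : ℂ),
          -(Complex.I / ((((2 * V₀ + 1) : ℝ) : ℂ) * (q : ℂ))) * dot w.1
            - ((2 / (2 * V₀ + 1) : ℝ) : ℂ) * w.2)
       A (B u) = u ∧ B (A u) = u) := by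
  intro u
  have hexi : ∃ i, ξ i ≠ 0 := by
    by_contra h; push_neg at h; exact hξ (funext h)
  obtain ⟨i0, hi0⟩ := hexi
  have hq : (0:ℝ) < ∑ i, ξ i ^ 2 :=
    Finset.sum_pos' (fun j _ => sq_nonneg _) ⟨i0, Finset.mem_univ i0, by positivity⟩
  dsimp only
  set q : ℝ := ∑ i, ξ i ^ 2 with hqdef
  have hq0 : (q:ℂ) ≠ 0 := by exact_mod_cast hq.ne'
  have hVr : (2*V₀+1:ℝ) ≠ 0 := by positivity
  have hVc : 2*(V₀:ℂ)+1 ≠ 0 := by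
    have : ((2*V₀+1:ℝ):ℂ) ≠ 0 := by exact_mod_cast hVr
    push_cast at this; exact this
  have hQ : (∑ j, (ξ j:ℂ) * (ξ j:ℂ)) = (q:ℂ) := by
    rw [hqdef]; push_cast; exact Finset.sum_congr rfl fun j _ => (sq (ξ j : ℂ)).symm
  set d : ℂ := ∑ j, (ξ j:ℂ) * u.1 j with hddef
  have hsumB : (∑ j, (ξ j:ℂ) *
      (((1 / q : ℝ) : ℂ) * u.1 j
        - (((V₀ + 1) / ((2 * V₀ + 1) * q ^ 2) : ℝ) : ℂ) * d * (ξ j : ℂ)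
        + Complex.I / ((((2 * V₀ + 1) : ℝ) : ℂ) * (q : ℂ)) * u.2 * (ξ j : ℂ)))
      = ((1 / q : ℝ) : ℂ) * d
        - (((V₀ + 1) / ((2 * V₀ + 1) * q ^ 2) : ℝ) : ℂ) * d * (q:ℂ)
        + Complex.I / ((((2 * V₀ + 1) : ℝ) : ℂ) * (q : ℂ)) * u.2 * (q:ℂ) := by
    rw [← hQ, hddef]
    simp only [Finset.mul_sum, ← Finset.sum_sub_distrib, ← Finset.sum_add_distrib]
    exact Finset.sum_congr rfl fun j _ => by ring
  have hsumA : (∑ j, (ξ j:ℂ) *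
      ((q : ℂ) * u.1 j + d * (ξ j : ℂ) + Complex.I * (ξ j : ℂ) * u.2))
      = (q:ℂ) * d + d * (q:ℂ) + Complex.I * (q:ℂ) * u.2 := by
    have h : ∀ j, (ξ j:ℂ) * ((q:ℂ) * u.1 j + d * (ξ j:ℂ) + Complex.I * (ξ j:ℂ) * u.2)
        = (q:ℂ) * ((ξ j:ℂ) * u.1 j) + d * ((ξ j:ℂ) * (ξ j:ℂ))
          + Complex.I * u.2 * ((ξ j:ℂ) * (ξ j:ℂ)) := fun j => by ring
    simp only [h]
    rw [Finset.sum_add_distrib, Finset.sum_add_distrib, ← Finset.mul_sum, ← Finset.mul_sum,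
      ← Finset.mul_sum, hQ, ← hddef]
    ring
  constructor
  · refine Prod.ext (funext fun i => ?_) ?_
    · show _ = u.1 i
      rw [hsumB]
      push_cast
      linear_combination stokes_aux1 (q:ℂ) (V₀:ℂ) d u.2 (ξ i:ℂ) (u.1 i) hq0 hVc
    · show _ = u.2
      rw [hsumB]
      push_cast
      linear_combination stokes_aux2 (q:ℂ) (V₀:ℂ) d u.2 hq0 hVc
  · refine Prod.ext (funext fun i => ?_) ?_
    · show _ = u.1 i
      rw [hsumA]
      push_cast
      linear_combination stokes_aux3 (q:ℂ) (V₀:ℂ) d u.2 (ξ i:ℂ) (u.1 i) hq0 hVc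
    · show _ = u.2
      rw [hsumA]
      push_cast
      linear_combination stokes_aux4 (q:ℂ) (V₀:ℂ) d u.2 hq0 hVc
end

section
/- Let V₀ ≥ 0, ξ' ∈ ℝⁿ⁻¹ nonzero, and e a unit vector orthogonal to ξ'. Then the endomorphism σ(ξ') := (i V₀)/(2(2V₀+1)|ξ'|) · (ξ' ⊗ e♯ − e ⊗ ξ'♯) of ℂⁿ (where (a ⊗ b♯)(v) := ⟨b, v⟩ a) is self-adjoint, and each of its eigenvalues λ satisfies |λ| ≤ V₀/(2(2V₀+1)); in particular |λ| < 1/4, so the operators ±(1/2)·Id + σ(ξ') are invertible. -/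
open Complex

/-- Principal symbol of the boundary double layer operator `K`: self-adjointness,
eigenvalue bounds, and invertibility of `±1/2 + σ(ξ')`. -/
theorem dlp_symbol_selfAdjoint_eigenvalue_bound (n : ℕ) (V₀ : ℝ) (hV₀ : 0 ≤ V₀)
    (ξ' e : Fin n → ℝ) (hξ : ξ' ≠ 0) (he : ∑ i, e i ^ 2 = 1)
    (horth : ∑ i, ξ' i * e i = 0) :
    let nrm : ℝ := Real.sqrt (∑ i, ξ' i ^ 2)
    let c : ℂ := Complex.I * (V₀ : ℂ) / (2 * (2 * (V₀ : ℂ) + 1) * (nrm : ℂ))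
    let σ : Matrix (Fin n) (Fin n) ℂ :=
      Matrix.of fun i j => c * ((ξ' i : ℂ) * (e j : ℂ) - (e i : ℂ) * (ξ' j : ℂ))
    σ.IsHermitian ∧
    (∀ μ : ℂ, μ ∈ spectrum ℂ σ → ‖μ‖ ≤ V₀ / (2 * (2 * V₀ + 1))) ∧
    (∀ μ : ℂ, μ ∈ spectrum ℂ σ → ‖μ‖ < 1 / 4) ∧
    IsUnit ((1 / 2 : ℂ) • (1 : Matrix (Fin n) (Fin n) ℂ) + σ) ∧
    IsUnit (-(1 / 2 : ℂ) • (1 : Matrix (Fin n) (Fin n) ℂ) + σ) := by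
  intro nrm c σ
  set S : ℝ := ∑ i, ξ' i ^ 2 with hSdef
  have hS : 0 < S := by
    obtain ⟨i, hi⟩ := Function.ne_iff.mp hξ
    have hi' : ξ' i ≠ 0 := hi
    exact Finset.sum_pos' (fun j _ => sq_nonneg _) ⟨i, Finset.mem_univ i, by positivity⟩
  have hden : (0:ℝ) < 2 * V₀ + 1 := by linarith
  set r : ℝ := V₀ / (2 * (2 * V₀ + 1)) with hrdef
  have hr0 : 0 ≤ r := by positivity
  have hr4 : r < 1 / 4 := by
    rw [hrdef, div_lt_iff₀ (by linarith)]
    linarith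
  have hnrm2 : (nrm : ℂ) ^ 2 = (S : ℂ) := by
    have : nrm ^ 2 = S := Real.sq_sqrt hS.le
    push_cast [← this]
    ring
  have hnrm0 : (nrm : ℂ) ≠ 0 := by
    have : (0:ℝ) < nrm := Real.sqrt_pos.mpr hS
    exact_mod_cast this.ne'
  have hdenC : (2 * (V₀:ℂ) + 1) ≠ 0 := by
    have : ((2 * V₀ + 1 : ℝ) : ℂ) ≠ 0 := by exact_mod_cast hden.ne'
    push_cast at this
    exact this
  -- coerced sums
  have hx : ∑ k, ((ξ' k : ℂ)) ^ 2 = (S : ℂ) := by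
    rw [hSdef]; push_cast; ring
  have hy : ∑ k, ((e k : ℂ)) ^ 2 = 1 := by
    rw [show (1:ℂ) = ((1:ℝ):ℂ) by norm_num, ← he]; push_cast; ring
  have hxy : ∑ k, (ξ' k : ℂ) * (e k : ℂ) = 0 := by
    rw [show (0:ℂ) = ((0:ℝ):ℂ) by norm_num, ← horth]; push_cast; ring
  -- conjugate of c
  have hcconj : starRingEnd ℂ c = -c := by
    show starRingEnd ℂ (Complex.I * (V₀ : ℂ) / (2 * (2 * (V₀ : ℂ) + 1) * (nrm : ℂ)))
      = -(Complex.I * (V₀ : ℂ) / (2 * (2 * (V₀ : ℂ) + 1) * (nrm : ℂ)))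
    simp only [map_div₀, map_mul, map_add, map_one, map_ofNat, Complex.conj_I,
      Complex.conj_ofReal]
    ring
  -- Hermitian
  have hherm : σ.IsHermitian := by
    ext i j
    show starRingEnd ℂ (σ j i) = σ i j
    rw [show σ j i = c * ((ξ' j : ℂ) * (e i : ℂ) - (e j : ℂ) * (ξ' i : ℂ)) from rfl,
      show σ i j = c * ((ξ' i : ℂ) * (e j : ℂ) - (e i : ℂ) * (ξ' j : ℂ)) from rfl,
      map_mul, hcconj, map_sub, map_mul, map_mul, Complex.conj_ofReal, Complex.conj_ofReal,
      Complex.conj_ofReal, Complex.conj_ofReal]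
    ring
  -- square
  have hsq : ∀ i j, (σ * σ) i j =
      c ^ 2 * (-((ξ' i : ℂ) * (ξ' j : ℂ)) - (S : ℂ) * ((e i : ℂ) * (e j : ℂ))) := by
    intro i j
    rw [Matrix.mul_apply]
    calc ∑ k, σ i k * σ k j
        = ∑ k, (c ^ 2 * (((ξ' i : ℂ) * (e j : ℂ)) * ((ξ' k : ℂ) * (e k : ℂ))
            - ((ξ' i : ℂ) * (ξ' j : ℂ)) * ((e k : ℂ)) ^ 2
            - ((e i : ℂ) * (e j : ℂ)) * ((ξ' k : ℂ)) ^ 2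
            + ((e i : ℂ) * (ξ' j : ℂ)) * ((ξ' k : ℂ) * (e k : ℂ)))) := by
          refine Finset.sum_congr rfl fun k _ => by simp only [σ, Matrix.of_apply]; ring
      _ = c ^ 2 * (-((ξ' i : ℂ) * (ξ' j : ℂ)) - (S : ℂ) * ((e i : ℂ) * (e j : ℂ))) := by
          rw [← Finset.mul_sum]
          simp only [Finset.sum_add_distrib, Finset.sum_sub_distrib, ← Finset.mul_sum,
            hx, hy, hxy]
          ring
  -- cube
  have hc2S : c ^ 2 * (S : ℂ) = -((r : ℂ)) ^ 2 := by
    rw [hrdef]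
    push_cast
    rw [show c = Complex.I * (V₀ : ℂ) / (2 * (2 * (V₀ : ℂ) + 1) * (nrm : ℂ)) from rfl]
    field_simp
    rw [Complex.I_sq, hnrm2]
    ring
  have hcube : σ * σ * σ = (((r : ℂ)) ^ 2) • σ := by
    ext i j
    rw [Matrix.mul_apply]
    calc ∑ k, (σ * σ) i k * σ k j
        = ∑ k, (c ^ 2 * c * (-(((ξ' i : ℂ) * (e j : ℂ)) * ((ξ' k : ℂ)) ^ 2)
            + ((ξ' i : ℂ) * (ξ' j : ℂ)) * ((ξ' k : ℂ) * (e k : ℂ))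
            - (S : ℂ) * (((e i : ℂ) * (e j : ℂ)) * ((ξ' k : ℂ) * (e k : ℂ)))
            + (S : ℂ) * (((e i : ℂ) * (ξ' j : ℂ)) * ((e k : ℂ)) ^ 2))) := by
          refine Finset.sum_congr rfl fun k _ => by
            rw [hsq]
            show _ = c ^ 2 * c * (-(((ξ' i : ℂ) * (e j : ℂ)) * ((ξ' k : ℂ)) ^ 2)
              + ((ξ' i : ℂ) * (ξ' j : ℂ)) * ((ξ' k : ℂ) * (e k : ℂ))
              - (S : ℂ) * (((e i : ℂ) * (e j : ℂ)) * ((ξ' k : ℂ) * (e k : ℂ)))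
              + (S : ℂ) * (((e i : ℂ) * (ξ' j : ℂ)) * ((e k : ℂ)) ^ 2))
            rw [show σ k j = c * ((ξ' k : ℂ) * (e j : ℂ) - (e k : ℂ) * (ξ' j : ℂ)) from rfl]
            ring
      _ = (c ^ 2 * (S:ℂ)) * (c * (-((ξ' i : ℂ) * (e j : ℂ)) + (e i:ℂ) * (ξ' j:ℂ))) := by
          rw [← Finset.mul_sum]
          simp only [Finset.sum_add_distrib, Finset.sum_sub_distrib, Finset.sum_neg_distrib,
            ← Finset.mul_sum, hx, hy, hxy]
          ring
      _ = (((r : ℂ)) ^ 2) • σ i j := by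
          rw [hc2S]
          show _ = ((r:ℂ))^2 * (c * ((ξ' i : ℂ) * (e j : ℂ) - (e i : ℂ) * (ξ' j : ℂ)))
          ring
  -- eigenvalue bound
  have hbound : ∀ μ : ℂ, μ ∈ spectrum ℂ σ → ‖μ‖ ≤ r := by
    intro μ hμ
    rw [spectrum.mem_iff] at hμ
    rw [Matrix.isUnit_iff_isUnit_det, isUnit_iff_ne_zero, not_not] at hμ
    obtain ⟨v, hv0, hv⟩ := (Matrix.exists_mulVec_eq_zero_iff).mpr hμ
    have hev : σ.mulVec v = μ • v := by
      have := hv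
      rw [Matrix.sub_mulVec, sub_eq_zero] at this
      rw [← this, Algebra.algebraMap_eq_smul_one, Matrix.smul_mulVec, Matrix.one_mulVec]
    have h3 : (μ ^ 3 - (r:ℂ)^2 * μ) • v = 0 := by
      have l1 : (σ * σ * σ).mulVec v = (μ ^ 3) • v := by
        rw [← Matrix.mulVec_mulVec, ← Matrix.mulVec_mulVec]
        simp only [hev, Matrix.mulVec_smul, smul_smul]
        congr 1
        ring
      have l2 : (σ * σ * σ).mulVec v = ((r:ℂ)^2 * μ) • v := by
        rw [hcube, Matrix.smul_mulVec, hev, smul_smul]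
      rw [sub_smul, l1.symm.trans l2]
      simp
    obtain ⟨i, hi⟩ := Function.ne_iff.mp hv0
    have hi' : v i ≠ 0 := hi
    have hzero : (μ ^ 3 - (r:ℂ)^2 * μ) * v i = 0 := congrFun h3 i
    have hμ3 : μ ^ 3 = (r:ℂ)^2 * μ := by
      rcases mul_eq_zero.mp hzero with h | h
      · linear_combination h
      · exact absurd h hi'
    have hfac : μ * (μ - (r:ℂ)) * (μ + (r:ℂ)) = 0 := by linear_combination hμ3
    rcases mul_eq_zero.mp hfac with h | h
    · rcases mul_eq_zero.mp h with h | h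
      · simp [h, hr0]
      · rw [sub_eq_zero] at h
        simp [h, Complex.norm_real, _root_.abs_of_nonneg hr0]
    · have hmu : μ = -(r:ℂ) := by linear_combination h
      simp [hmu, Complex.norm_real, _root_.abs_of_nonneg hr0]
  have hlt : ∀ μ : ℂ, μ ∈ spectrum ℂ σ → ‖μ‖ < 1 / 4 :=
    fun μ hμ => lt_of_le_of_lt (hbound μ hμ) hr4
  have hnot : ∀ a : ℂ, ‖a‖ = 1/2 → a ∉ spectrum ℂ σ := by
    intro a ha h
    have := hlt a h
    rw [ha] at this
    norm_num at this
  refine ⟨hherm, hbound, hlt, ?_, ?_⟩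
  · have h1 := spectrum.notMem_iff.mp (hnot (-(1/2):ℂ) (by simp))
    have : IsUnit (-(algebraMap ℂ (Matrix (Fin n) (Fin n) ℂ) (-(1/2):ℂ) - σ)) := h1.neg
    convert this using 1
    rw [Algebra.algebraMap_eq_smul_one, neg_sub, neg_smul, sub_neg_eq_add, add_comm]
  · have h1 := spectrum.notMem_iff.mp (hnot ((1/2):ℂ) (by simp))
    have : IsUnit (-(algebraMap ℂ (Matrix (Fin n) (Fin n) ℂ) ((1/2):ℂ) - σ)) := h1.neg
    convert this using 1
    rw [Algebra.algebraMap_eq_smul_one, neg_sub, neg_smul, sub_eq_add_neg, add_comm]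
end

section
/- Let f := (V₀+1)/(2V₀+1), g := 1/(2V₀+1) with V₀ ≥ 0, and let ξ' ∈ ℝⁿ⁻¹ be nonzero. Then (1/(4π)) ∫_ℝ [ −2i( (1/(|ξ'|²+t²) − 2f t²/(|ξ'|²+t²)²) eₙ⊗ξ' + (g/(|ξ'|²+t²) − 2f t²/(|ξ'|²+t²)²) ξ'♯⊗eₙ♯ ) ] dt = (i V₀/(2(2V₀+1)|ξ'|)) (ξ'♯⊗eₙ♯ − eₙ⊗ξ'). -/
open Complex MeasureTheory

open Real Filter MeasureTheory

lemma integrable_one_div_sq_add_sq (s : ℝ) (hs : 0 < s) :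
    Integrable fun t : ℝ => 1 / (s ^ 2 + t ^ 2) := by
  have h := (integrable_inv_one_add_sq.comp_div (R := s) hs.ne').const_mul (1 / s ^ 2)
  refine h.congr (Filter.Eventually.of_forall fun t => ?_)
  have h1 : 0 < s ^ 2 + t ^ 2 := by positivity
  field_simp

lemma integrable_sq_div_sq (s : ℝ) (hs : 0 < s) :
    Integrable fun t : ℝ => t ^ 2 / (s ^ 2 + t ^ 2) ^ 2 := by
  refine (integrable_one_div_sq_add_sq s hs).mono ?_ (Filter.Eventually.of_forall fun t => ?_)
  · apply Continuous.aestronglyMeasurable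
    exact continuous_pow 2 |>.div (by continuity) (fun t => by positivity)
  · have h1 : 0 < s ^ 2 + t ^ 2 := by positivity
    rw [Real.norm_eq_abs, Real.norm_eq_abs, _root_.abs_of_nonneg (by positivity), _root_.abs_of_nonneg (by positivity)]
    rw [div_le_div_iff₀ (by positivity) h1, pow_two (s^2+t^2), one_mul, mul_le_mul_iff_of_pos_right h1]
    nlinarith

lemma tendsto_div_sq_add_sq_atTop (s : ℝ) (hs : 0 < s) :
    Tendsto (fun t : ℝ => t / (s ^ 2 + t ^ 2)) atTop (nhds 0) := by
  refine squeeze_zero_norm (fun t => ?_) (tendsto_inv_atTop_zero.comp tendsto_abs_atTop_atTop)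
  simp only [Real.norm_eq_abs, Function.comp]
  rcases eq_or_ne t 0 with rfl | ht
  · simp
  · have h1 : 0 < s ^ 2 + t ^ 2 := by positivity
    rw [_root_.abs_div, _root_.abs_of_pos h1, div_le_iff₀ h1, inv_mul_eq_div, le_div_iff₀ (_root_.abs_pos.2 ht),
      _root_.abs_mul_abs_self]
    nlinarith

lemma tendsto_div_sq_add_sq_atBot (s : ℝ) (hs : 0 < s) :
    Tendsto (fun t : ℝ => t / (s ^ 2 + t ^ 2)) atBot (nhds 0) := by
  refine squeeze_zero_norm (fun t => ?_) (tendsto_inv_atTop_zero.comp tendsto_abs_atBot_atTop)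
  simp only [Real.norm_eq_abs, Function.comp]
  rcases eq_or_ne t 0 with rfl | ht
  · simp
  · have h1 : 0 < s ^ 2 + t ^ 2 := by positivity
    rw [_root_.abs_div, _root_.abs_of_pos h1, div_le_iff₀ h1, inv_mul_eq_div, le_div_iff₀ (_root_.abs_pos.2 ht),
      _root_.abs_mul_abs_self]
    nlinarith

lemma integral_one_div_sq_add_sq (s : ℝ) (hs : 0 < s) :
    ∫ t : ℝ, 1 / (s ^ 2 + t ^ 2) = π / s := by
  have hderiv : ∀ t : ℝ, HasDerivAt (fun t : ℝ => (1 / s) * Real.arctan (t / s))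
      (1 / (s ^ 2 + t ^ 2)) t := by
    intro t
    have h1 : 0 < s ^ 2 + t ^ 2 := by positivity
    have h := ((Real.hasDerivAt_arctan (t / s)).comp t ((hasDerivAt_id t).div_const s)).const_mul
      (1 / s)
    refine h.congr_deriv ?_
    field_simp
  have htop : Tendsto (fun t : ℝ => (1 / s) * Real.arctan (t / s)) atTop (nhds ((1 / s) * (π / 2))) := by
    refine Tendsto.const_mul _ ?_
    have := (tendsto_nhds_of_tendsto_nhdsWithin Real.tendsto_arctan_atTop).comp
      (tendsto_id.atTop_div_const hs); exact this
  have hbot : Tendsto (fun t : ℝ => (1 / s) * Real.arctan (t / s)) atBot (nhds ((1 / s) * (-(π / 2)))) := by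
    refine Tendsto.const_mul _ ?_
    have := (tendsto_nhds_of_tendsto_nhdsWithin Real.tendsto_arctan_atBot).comp
      (tendsto_id.atBot_div_const hs); exact this
  rw [integral_of_hasDerivAt_of_tendsto hderiv (integrable_one_div_sq_add_sq s hs) hbot htop]
  field_simp
  ring

lemma integral_sq_div_sq (s : ℝ) (hs : 0 < s) :
    ∫ t : ℝ, t ^ 2 / (s ^ 2 + t ^ 2) ^ 2 = π / (2 * s) := by
  have hderiv : ∀ t : ℝ, HasDerivAt
      (fun t : ℝ => (1 / 2) * ((1 / s) * Real.arctan (t / s) - t / (s ^ 2 + t ^ 2)))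
      (t ^ 2 / (s ^ 2 + t ^ 2) ^ 2) t := by
    intro t
    have h1 : 0 < s ^ 2 + t ^ 2 := by positivity
    have harc := ((Real.hasDerivAt_arctan (t / s)).comp t ((hasDerivAt_id t).div_const s)).const_mul
      (1 / s)
    have hfrac : HasDerivAt (fun t : ℝ => t / (s ^ 2 + t ^ 2))
        ((1 * (s ^ 2 + t ^ 2) - t * (2 * t)) / (s ^ 2 + t ^ 2) ^ 2) t := by
      have hd : HasDerivAt (fun t : ℝ => s ^ 2 + t ^ 2) (2 * t) t := by
        simpa using ((hasDerivAt_pow 2 t).const_add (s ^ 2))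
      exact (hasDerivAt_id t).div hd h1.ne'
    have h := (harc.sub hfrac).const_mul (1 / 2 : ℝ)
    refine h.congr_deriv ?_
    field_simp
    ring
  have htop : Tendsto (fun t : ℝ => (1 / 2) * ((1 / s) * Real.arctan (t / s) - t / (s ^ 2 + t ^ 2)))
      atTop (nhds ((1 / 2) * ((1 / s) * (π / 2) - 0))) := by
    refine Tendsto.const_mul _ (Tendsto.sub (Tendsto.const_mul _ ?_)
      (tendsto_div_sq_add_sq_atTop s hs))
    have := (tendsto_nhds_of_tendsto_nhdsWithin Real.tendsto_arctan_atTop).comp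
      (tendsto_id.atTop_div_const hs); exact this
  have hbot : Tendsto (fun t : ℝ => (1 / 2) * ((1 / s) * Real.arctan (t / s) - t / (s ^ 2 + t ^ 2)))
      atBot (nhds ((1 / 2) * ((1 / s) * (-(π / 2)) - 0))) := by
    refine Tendsto.const_mul _ (Tendsto.sub (Tendsto.const_mul _ ?_)
      (tendsto_div_sq_add_sq_atBot s hs))
    have := (tendsto_nhds_of_tendsto_nhdsWithin Real.tendsto_arctan_atBot).comp
      (tendsto_id.atBot_div_const hs); exact this
  rw [integral_of_hasDerivAt_of_tendsto hderiv (integrable_sq_div_sq s hs) hbot htop]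
  field_simp
  ring

/-- The computation of `σ₀(K)` in Theorem `thm.K1`, stated entrywise. -/
theorem sigma0_K_integral (n : ℕ) (V₀ : ℝ) (hV₀ : 0 ≤ V₀)
    (ξ' : Fin (n + 1) → ℝ) (hξlast : ξ' (Fin.last n) = 0) (hξ : ξ' ≠ 0) :
    let f : ℝ := (V₀ + 1) / (2 * V₀ + 1)
    let g : ℝ := 1 / (2 * V₀ + 1)
    let eₙ : Fin (n + 1) → ℝ := Pi.single (Fin.last n) 1
    let q : ℝ := ∑ i, ξ' i ^ 2
    let nrm : ℝ := Real.sqrt q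
    ∀ i j : Fin (n + 1),
      (1 / (4 * Real.pi) : ℝ) •
          ∫ t : ℝ,
            (-2 * Complex.I) *
              (((1 / (q + t ^ 2) - 2 * f * t ^ 2 / (q + t ^ 2) ^ 2 : ℝ) : ℂ) *
                  (eₙ i : ℂ) * (ξ' j : ℂ) +
                ((g / (q + t ^ 2) - 2 * f * t ^ 2 / (q + t ^ 2) ^ 2 : ℝ) : ℂ) *
                  (ξ' i : ℂ) * (eₙ j : ℂ))
        = Complex.I * (V₀ : ℂ) / (2 * (2 * (V₀ : ℂ) + 1) * (nrm : ℂ)) *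
            ((ξ' i : ℂ) * (eₙ j : ℂ) - (eₙ i : ℂ) * (ξ' j : ℂ)) := by
  intro f g eₙ q nrm i j
  have hf : f = (V₀ + 1) / (2 * V₀ + 1) := rfl
  have hg : g = 1 / (2 * V₀ + 1) := rfl
  obtain ⟨k, hk⟩ : ∃ k, ξ' k ≠ 0 := Function.ne_iff.1 hξ
  have hq : 0 < q := Finset.sum_pos' (fun i _ => sq_nonneg _)
    ⟨k, Finset.mem_univ k, by positivity⟩
  have hs : 0 < nrm := Real.sqrt_pos.2 hq
  have hq2 : q = nrm ^ 2 := (Real.sq_sqrt hq.le).symm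
  rw [hq2]
  set A : ℝ → ℝ := fun t => 1 / (nrm ^ 2 + t ^ 2) - 2 * f * t ^ 2 / (nrm ^ 2 + t ^ 2) ^ 2 with hA_def
  set B : ℝ → ℝ := fun t => g / (nrm ^ 2 + t ^ 2) - 2 * f * t ^ 2 / (nrm ^ 2 + t ^ 2) ^ 2 with hB_def
  have hA : Integrable A := by
    refine ((integrable_one_div_sq_add_sq nrm hs).sub
      ((integrable_sq_div_sq nrm hs).const_mul (2 * f))).congr
      (Filter.Eventually.of_forall fun t => ?_)
    simp only [hA_def, Pi.sub_apply]; ring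
  have hB : Integrable B := by
    refine (((integrable_one_div_sq_add_sq nrm hs).const_mul g).sub
      ((integrable_sq_div_sq nrm hs).const_mul (2 * f))).congr
      (Filter.Eventually.of_forall fun t => ?_)
    simp only [hB_def, Pi.sub_apply]; ring
  have hIA : ∫ t : ℝ, A t = π / nrm - 2 * f * (π / (2 * nrm)) := by
    have : (fun t : ℝ => A t)
        = fun t : ℝ => 1 / (nrm ^ 2 + t ^ 2) - (2 * f) * (t ^ 2 / (nrm ^ 2 + t ^ 2) ^ 2) := by
      funext t; simp only [hA_def]; ring
    rw [this, integral_sub (integrable_one_div_sq_add_sq nrm hs)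
      ((integrable_sq_div_sq nrm hs).const_mul (2 * f)),
      integral_one_div_sq_add_sq nrm hs, integral_const_mul, integral_sq_div_sq nrm hs]
  have hIB : ∫ t : ℝ, B t = g * (π / nrm) - 2 * f * (π / (2 * nrm)) := by
    have : (fun t : ℝ => B t)
        = fun t : ℝ => g * (1 / (nrm ^ 2 + t ^ 2)) - (2 * f) * (t ^ 2 / (nrm ^ 2 + t ^ 2) ^ 2) := by
      funext t; simp only [hB_def]; ring
    rw [this, integral_sub ((integrable_one_div_sq_add_sq nrm hs).const_mul g)
      ((integrable_sq_div_sq nrm hs).const_mul (2 * f)),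
      integral_const_mul, integral_const_mul, integral_one_div_sq_add_sq nrm hs,
      integral_sq_div_sq nrm hs]
  have key : ∀ t : ℝ,
      (-2 * Complex.I) *
        (((1 / (nrm ^ 2 + t ^ 2) - 2 * f * t ^ 2 / (nrm ^ 2 + t ^ 2) ^ 2 : ℝ) : ℂ) *
            (eₙ i : ℂ) * (ξ' j : ℂ) +
          ((g / (nrm ^ 2 + t ^ 2) - 2 * f * t ^ 2 / (nrm ^ 2 + t ^ 2) ^ 2 : ℝ) : ℂ) *
            (ξ' i : ℂ) * (eₙ j : ℂ))
      = ((A t : ℝ) : ℂ) * (-2 * Complex.I * (eₙ i : ℂ) * (ξ' j : ℂ)) +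
          ((B t : ℝ) : ℂ) * (-2 * Complex.I * (ξ' i : ℂ) * (eₙ j : ℂ)) := by
    intro t; simp only [hA_def, hB_def]; ring
  simp only [key]
  have hc₁ : Integrable (fun t : ℝ =>
      ((A t : ℝ) : ℂ) * (-2 * Complex.I * (eₙ i : ℂ) * (ξ' j : ℂ))) :=
    hA.ofReal.mul_const _
  have hc₂ : Integrable (fun t : ℝ =>
      ((B t : ℝ) : ℂ) * (-2 * Complex.I * (ξ' i : ℂ) * (eₙ j : ℂ))) :=
    hB.ofReal.mul_const _
  have hAo : (∫ t : ℝ, ((A t : ℝ) : ℂ)) = ((∫ t : ℝ, A t : ℝ) : ℂ) := integral_ofReal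
  have hBo : (∫ t : ℝ, ((B t : ℝ) : ℂ)) = ((∫ t : ℝ, B t : ℝ) : ℂ) := integral_ofReal
  rw [integral_add hc₁ hc₂, integral_mul_const _ _, integral_mul_const _ _, hAo, hBo,
    hIA, hIB, Complex.real_smul]
  have hπ : (π : ℂ) ≠ 0 := Complex.ofReal_ne_zero.2 Real.pi_ne_zero
  have hnrm : (nrm : ℂ) ≠ 0 := Complex.ofReal_ne_zero.2 hs.ne'
  have hden : 2 * (V₀ : ℂ) + 1 ≠ 0 := by
    have h : (2 * V₀ + 1 : ℝ) ≠ 0 := by positivity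
    exact_mod_cast (Complex.ofReal_ne_zero.2 h : ((2 * V₀ + 1 : ℝ) : ℂ) ≠ 0)
  have hdenR : (2 * V₀ + 1 : ℝ) ≠ 0 := by positivity
  have hval1 : π / nrm - 2 * f * (π / (2 * nrm)) = π * (V₀ / (2 * V₀ + 1)) / nrm := by
    rw [hf]; field_simp; ring
  have hval2 : g * (π / nrm) - 2 * f * (π / (2 * nrm)) = -(π * (V₀ / (2 * V₀ + 1)) / nrm) := by
    rw [hf, hg]; field_simp; ring
  rw [hval1, hval2]
  push_cast
  field_simp [hπ, hnrm, hden]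
  ring
end

section
/- Let ξ' ∈ ℝⁿ⁻¹ be nonzero, ν a unit vector orthogonal to ξ', and f := (V₀+1)/(2V₀+1) with V₀ ≥ 0. Then (1/(2π)) ∫_ℝ [ 1/(|ξ'|²+t²) · Id − f/(|ξ'|²+t²)² · (ξ'♯⊗ξ' ) − f t²/(|ξ'|²+t²)² · (ν⊗ν♯) ] dt = (1/(2|ξ'|))·Id − (f/(4|ξ'|³))·ξ'♯⊗ξ' − (f/(4|ξ'|))·ν⊗ν♯, and this operator is self-adjoint and positive definite (hence invertible) when 0 ≤ f ≤ 1. -/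
open MeasureTheory Real Filter Topology

lemma aux_integrable (q : ℝ) (hq : 0 < q) : Integrable fun t : ℝ => (q + t ^ 2)⁻¹ := by
  have hm : 0 < min q 1 := lt_min hq one_pos
  apply Integrable.mono' (integrable_inv_one_add_sq.const_mul (min q 1)⁻¹)
  · exact (Continuous.inv₀ (by continuity) fun t => by positivity).aestronglyMeasurable
  · refine Filter.Eventually.of_forall fun t => ?_
    rw [Real.norm_eq_abs, abs_of_nonneg (by positivity)]
    rw [← mul_inv]
    apply inv_anti₀ (by positivity)
    have h1 : min q 1 ≤ q := min_le_left _ _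
    have h2 : min q 1 ≤ 1 := min_le_right _ _
    nlinarith [sq_nonneg t]

lemma aux_integrable2 (q : ℝ) (hq : 0 < q) : Integrable fun t : ℝ => ((q + t ^ 2) ^ 2)⁻¹ := by
  apply Integrable.mono' ((aux_integrable q hq).const_mul q⁻¹)
  · exact (Continuous.inv₀ (by continuity) fun t => by positivity).aestronglyMeasurable
  · refine Filter.Eventually.of_forall fun t => ?_
    rw [Real.norm_eq_abs, abs_of_nonneg (by positivity), ← mul_inv]
    apply inv_anti₀ (by positivity)
    nlinarith [sq_nonneg t]

lemma aux_integrable3 (q : ℝ) (hq : 0 < q) :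
    Integrable fun t : ℝ => t ^ 2 / (q + t ^ 2) ^ 2 := by
  apply Integrable.mono' (aux_integrable q hq)
  · exact (Continuous.div (by continuity) (by continuity) fun t => by positivity).aestronglyMeasurable
  · refine Filter.Eventually.of_forall fun t => ?_
    rw [Real.norm_eq_abs, abs_of_nonneg (by positivity)]
    rw [inv_eq_one_div, div_le_div_iff₀ (by positivity) (by positivity)]
    nlinarith [sq_nonneg t, sq_nonneg q, hq.le]

lemma aux_int1 (q : ℝ) (hq : 0 < q) :
    ∫ t : ℝ, (q + t ^ 2)⁻¹ = π / Real.sqrt q := by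
  set s := Real.sqrt q with hs
  have hs0 : 0 < s := Real.sqrt_pos.2 hq
  have hs2 : s ^ 2 = q := Real.sq_sqrt hq.le
  have hderiv : ∀ t : ℝ, HasDerivAt (fun t => arctan (t / s) / s) ((q + t ^ 2)⁻¹) t := by
    intro t
    have h1 : HasDerivAt (fun t : ℝ => t / s) (1 / s) t := by
      simpa using (hasDerivAt_id t).div_const s
    have h2 := (Real.hasDerivAt_arctan (t / s)).comp t h1
    have h3 := h2.div_const s
    refine h3.congr_deriv (Eq.symm ?_)
    field_simp
    nlinarith [sq_nonneg t]
  have hdivtop : Tendsto (fun t : ℝ => t / s) atTop atTop :=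
    Tendsto.atTop_div_const hs0 tendsto_id
  have hdivbot : Tendsto (fun t : ℝ => t / s) atBot atBot := by
    exact Tendsto.atBot_div_const hs0 tendsto_id
  have htop : Tendsto (fun t : ℝ => arctan (t / s) / s) atTop (𝓝 ((π / 2) / s)) := by
    exact ((Real.tendsto_arctan_atTop.mono_right nhdsWithin_le_nhds).comp hdivtop).div_const s
  have hbot : Tendsto (fun t : ℝ => arctan (t / s) / s) atBot (𝓝 ((-(π / 2)) / s)) := by
    exact ((Real.tendsto_arctan_atBot.mono_right nhdsWithin_le_nhds).comp hdivbot).div_const s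
  rw [integral_of_hasDerivAt_of_tendsto hderiv (aux_integrable q hq) hbot htop]
  field_simp
  ring

lemma aux_tend0 (q : ℝ) (hq : 0 < q) :
    Tendsto (fun t : ℝ => t / (q + t ^ 2)) atTop (𝓝 0) := by
  apply tendsto_of_tendsto_of_tendsto_of_le_of_le' tendsto_const_nhds
    tendsto_inv_atTop_zero (g := fun _ : ℝ => (0:ℝ)) (h := fun t : ℝ => t⁻¹)
  · filter_upwards [eventually_gt_atTop (0 : ℝ)] with t ht
    positivity
  · filter_upwards [eventually_gt_atTop (0 : ℝ)] with t ht
    rw [div_le_iff₀ (by positivity), inv_mul_eq_div, le_div_iff₀ ht]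
    nlinarith
lemma aux_tend0' (q : ℝ) (hq : 0 < q) :
    Tendsto (fun t : ℝ => t / (q + t ^ 2)) atBot (𝓝 0) := by
  have h := ((aux_tend0 q hq).comp tendsto_neg_atBot_atTop).neg
  rw [neg_zero] at h
  refine h.congr fun t => ?_
  simp [Function.comp]
  ring

lemma aux_int2 (q : ℝ) (hq : 0 < q) :
    ∫ t : ℝ, ((q + t ^ 2) ^ 2)⁻¹ = π / (2 * q * Real.sqrt q) := by
  set s := Real.sqrt q with hs
  have hs0 : 0 < s := Real.sqrt_pos.2 hq
  have hs2 : s ^ 2 = q := Real.sq_sqrt hq.le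
  have hpos : ∀ t : ℝ, 0 < q + t ^ 2 := fun t => by positivity
  have hderiv : ∀ t : ℝ,
      HasDerivAt (fun t => (t / (q + t ^ 2) + arctan (t / s) / s) / (2 * q))
        (((q + t ^ 2) ^ 2)⁻¹) t := by
    intro t
    have h1 : HasDerivAt (fun t : ℝ => t / (q + t ^ 2))
        ((1 * (q + t ^ 2) - t * (2 * t)) / (q + t ^ 2) ^ 2) t := by
      have hden : HasDerivAt (fun t : ℝ => q + t ^ 2) (2 * t) t := by
        simpa using (hasDerivAt_pow 2 t).const_add q
      exact (hasDerivAt_id t).div hden (hpos t).ne'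
    have h2 : HasDerivAt (fun t : ℝ => arctan (t / s) / s) ((q + t ^ 2)⁻¹) t := by
      have ha : HasDerivAt (fun t : ℝ => t / s) (1 / s) t := by
        simpa using (hasDerivAt_id t).div_const s
      have hb := ((Real.hasDerivAt_arctan (t / s)).comp t ha).div_const s
      refine hb.congr_deriv (Eq.symm ?_)
      field_simp
      nlinarith [sq_nonneg t]
    have h3 := (h1.add h2).div_const (2 * q)
    refine h3.congr_deriv (Eq.symm ?_)
    have h4 := (hpos t).ne'
    field_simp
    ring
  have harcTop : Tendsto (fun t : ℝ => arctan (t / s) / s) atTop (𝓝 (π / 2 / s)) :=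
    ((Real.tendsto_arctan_atTop.mono_right nhdsWithin_le_nhds).comp
      (Tendsto.atTop_div_const hs0 tendsto_id)).div_const s
  have harcBot : Tendsto (fun t : ℝ => arctan (t / s) / s) atBot (𝓝 (-(π / 2) / s)) :=
    ((Real.tendsto_arctan_atBot.mono_right nhdsWithin_le_nhds).comp
      (Tendsto.atBot_div_const hs0 tendsto_id)).div_const s
  have htop : Tendsto (fun t : ℝ => (t / (q + t ^ 2) + arctan (t / s) / s) / (2 * q)) atTop
      (𝓝 ((0 + π / 2 / s) / (2 * q))) := ((aux_tend0 q hq).add harcTop).div_const _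
  have hbot : Tendsto (fun t : ℝ => (t / (q + t ^ 2) + arctan (t / s) / s) / (2 * q)) atBot
      (𝓝 ((0 + -(π / 2) / s) / (2 * q))) := ((aux_tend0' q hq).add harcBot).div_const _
  rw [integral_of_hasDerivAt_of_tendsto hderiv (aux_integrable2 q hq) hbot htop]
  field_simp
  ring

lemma aux_int3 (q : ℝ) (hq : 0 < q) :
    ∫ t : ℝ, t ^ 2 / (q + t ^ 2) ^ 2 = π / (2 * Real.sqrt q) := by
  have hpos : ∀ t : ℝ, 0 < q + t ^ 2 := fun t => by positivity
  have heq : (fun t : ℝ => t ^ 2 / (q + t ^ 2) ^ 2)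
      = fun t : ℝ => (q + t ^ 2)⁻¹ - q * ((q + t ^ 2) ^ 2)⁻¹ := by
    funext t
    have := (hpos t).ne'
    field_simp
    ring
  rw [heq, integral_sub (aux_integrable q hq) ((aux_integrable2 q hq).const_mul q),
    MeasureTheory.integral_const_mul, aux_int1 q hq, aux_int2 q hq]
  have hs0 : 0 < Real.sqrt q := Real.sqrt_pos.2 hq
  field_simp
  ring

lemma aux_entry (q : ℝ) (hq : 0 < q) (d a b : ℝ) :
    ∫ t : ℝ, (1 / (q + t ^ 2)) * d - (1 / (q + t ^ 2) ^ 2) * a - (t ^ 2 / (q + t ^ 2) ^ 2) * b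
      = (π / Real.sqrt q) * d - (π / (2 * q * Real.sqrt q)) * a - (π / (2 * Real.sqrt q)) * b := by
  have i1 := (aux_integrable q hq).mul_const d
  have i2 := (aux_integrable2 q hq).mul_const a
  have i3 := (aux_integrable3 q hq).mul_const b
  have i12 : Integrable (fun t : ℝ => (q + t ^ 2)⁻¹ * d - ((q + t ^ 2) ^ 2)⁻¹ * a) :=
    i1.sub i2
  simp only [one_div]
  rw [integral_sub i12 i3, integral_sub i1 i2,
    MeasureTheory.integral_mul_const, MeasureTheory.integral_mul_const,
    MeasureTheory.integral_mul_const, aux_int1 q hq, aux_int3 q hq, aux_int2 q hq]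

lemma aux_bessel {n : ℕ} (ξ' ν x : Fin n → ℝ) (hν : ∑ i, ν i ^ 2 = 1)
    (horth : ∑ i, ξ' i * ν i = 0) (hq : 0 < ∑ i, ξ' i ^ 2) :
    (∑ i, ξ' i * x i) ^ 2 / (∑ i, ξ' i ^ 2) + (∑ i, ν i * x i) ^ 2 ≤ ∑ i, x i ^ 2 := by
  set q := ∑ i, ξ' i ^ 2 with hqdef
  set S := ∑ i, ξ' i * x i with hS
  set B := ∑ i, ν i * x i with hB
  set a := S / q with ha
  have h0 : (0:ℝ) ≤ ∑ i, (x i - a * ξ' i - B * ν i) ^ 2 :=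
    Finset.sum_nonneg fun i _ => sq_nonneg _
  have e1 : ∀ i : Fin n, (x i - a * ξ' i - B * ν i) ^ 2
      = x i ^ 2 - 2 * a * (ξ' i * x i) - 2 * B * (ν i * x i) + a ^ 2 * ξ' i ^ 2
        + 2 * (a * B) * (ξ' i * ν i) + B ^ 2 * ν i ^ 2 := fun i => by ring
  rw [Finset.sum_congr rfl fun i _ => e1 i] at h0
  simp only [Finset.sum_add_distrib, Finset.sum_sub_distrib, ← Finset.mul_sum, ← hS, ← hB,
    ← hqdef, hν, horth, mul_zero, mul_one] at h0
  have hq' : q ≠ 0 := hq.ne'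
  have h2 : a ^ 2 * q = S ^ 2 / q := by rw [ha]; field_simp
  have h3 : 2 * a * S = 2 * (S ^ 2 / q) := by rw [ha]; field_simp
  rw [h2, h3] at h0
  linarith

/-- The principal symbol `σ₋₁(S)` of the boundary single layer operator
(Theorem `thm.jump.rel`(1)) and its ellipticity. -/
theorem sigma_S_integral_and_posDef (n : ℕ) (V₀ : ℝ) (hV₀ : 0 ≤ V₀)
    (ξ' ν : Fin n → ℝ) (hξ : ξ' ≠ 0) (hν : ∑ i, ν i ^ 2 = 1)
    (horth : ∑ i, ξ' i * ν i = 0) :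
    let f : ℝ := (V₀ + 1) / (2 * V₀ + 1)
    let q : ℝ := ∑ i, ξ' i ^ 2
    let nrm : ℝ := Real.sqrt q
    let M : Matrix (Fin n) (Fin n) ℝ :=
      Matrix.of fun i j =>
        (1 / (2 * nrm)) * (if i = j then 1 else 0)
          - (f / (4 * nrm ^ 3)) * (ξ' i * ξ' j)
          - (f / (4 * nrm)) * (ν i * ν j)
    (∀ i j : Fin n,
        (1 / (2 * Real.pi)) *
            ∫ t : ℝ,
              (1 / (q + t ^ 2)) * (if i = j then (1 : ℝ) else 0)
                - (f / (q + t ^ 2) ^ 2) * (ξ' i * ξ' j)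
                - (f * t ^ 2 / (q + t ^ 2) ^ 2) * (ν i * ν j)
          = M i j) ∧
    (0 ≤ f → f ≤ 1 → M.IsSymm ∧ M.PosDef ∧ IsUnit M) := by
  intro f q nrm M
  obtain ⟨i0, hi0⟩ := Function.ne_iff.mp hξ
  simp only [Pi.zero_apply] at hi0
  have hq : 0 < q :=
    Finset.sum_pos' (fun i _ => sq_nonneg _)
      ⟨i0, Finset.mem_univ _, by positivity⟩
  have hnrm : 0 < nrm := Real.sqrt_pos.2 hq
  have hnrm2 : nrm ^ 2 = q := Real.sq_sqrt hq.le
  constructor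
  · intro i j
    have hfun : (fun t : ℝ =>
        (1 / (q + t ^ 2)) * (if i = j then (1 : ℝ) else 0)
          - (f / (q + t ^ 2) ^ 2) * (ξ' i * ξ' j)
          - (f * t ^ 2 / (q + t ^ 2) ^ 2) * (ν i * ν j))
        = fun t : ℝ =>
        (1 / (q + t ^ 2)) * (if i = j then (1 : ℝ) else 0)
          - (1 / (q + t ^ 2) ^ 2) * (f * (ξ' i * ξ' j))
          - (t ^ 2 / (q + t ^ 2) ^ 2) * (f * (ν i * ν j)) := by
      funext t; ring
    rw [hfun, aux_entry q hq]
    show _ = (1 / (2 * nrm)) * (if i = j then 1 else 0)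
        - (f / (4 * nrm ^ 3)) * (ξ' i * ξ' j) - (f / (4 * nrm)) * (ν i * ν j)
    have hπ := Real.pi_ne_zero
    have hq' : q = nrm ^ 2 := hnrm2.symm
    rcases eq_or_ne i j with h | h
    · rw [if_pos h, hq', Real.sqrt_sq hnrm.le]
      field_simp
      ring
    · rw [if_neg h, hq', Real.sqrt_sq hnrm.le]
      field_simp
      ring
  · intro hf0 hf1
    have hsym : M.IsSymm := by
      ext i j
      show M j i = M i j
      simp only [M, Matrix.of_apply]
      rcases eq_or_ne i j with h | h
      · subst h; ring
      · rw [if_neg h, if_neg (Ne.symm h)]; ring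
    have hherm : M.IsHermitian := hsym
    have hquad : ∀ x : Fin n → ℝ, x ≠ 0 → 0 < dotProduct (star x) (Matrix.mulVec M x) := by
      intro x hx
      set S := ∑ i, ξ' i * x i with hS
      set B := ∑ i, ν i * x i with hB
      have key : ∀ i, (∑ j, M i j * x j)
          = (1 / (2 * nrm)) * x i - (f / (4 * nrm ^ 3) * ξ' i) * S
            - (f / (4 * nrm) * ν i) * B := by
        intro i
        have h1 : ∀ j, M i j * x j
            = (1 / (2 * nrm)) * (if i = j then x j else 0)
              - (f / (4 * nrm ^ 3) * ξ' i) * (ξ' j * x j)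
              - (f / (4 * nrm) * ν i) * (ν j * x j) := by
          intro j
          rcases eq_or_ne i j with h | h
          · subst h; simp only [M, Matrix.of_apply, eq_self_iff_true, if_true]; ring
          · simp only [M, Matrix.of_apply, if_neg h]; ring
        rw [Finset.sum_congr rfl fun j _ => h1 j]
        simp only [Finset.sum_sub_distrib, ← Finset.mul_sum, Finset.sum_ite_eq,
          Finset.mem_univ, if_true, ← hS, ← hB]
      have hdot : dotProduct (star x) (Matrix.mulVec M x)
          = (1 / (2 * nrm)) * (∑ i, x i ^ 2) - (f / (4 * nrm ^ 3) * S) * S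
            - (f / (4 * nrm) * B) * B := by
        simp only [dotProduct, Matrix.mulVec, Pi.star_apply, star_trivial]
        rw [Finset.sum_congr rfl fun i _ => by rw [key i]]
        have h2 : ∀ i, x i * ((1 / (2 * nrm)) * x i - (f / (4 * nrm ^ 3) * ξ' i) * S
              - (f / (4 * nrm) * ν i) * B)
            = (1 / (2 * nrm)) * x i ^ 2 - (f / (4 * nrm ^ 3) * S) * (ξ' i * x i)
              - (f / (4 * nrm) * B) * (ν i * x i) := fun i => by ring
        rw [Finset.sum_congr rfl fun i _ => h2 i]
        simp only [Finset.sum_sub_distrib, ← Finset.mul_sum, ← hS, ← hB]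
      rw [hdot]
      have hX : 0 < ∑ i, x i ^ 2 := by
        obtain ⟨i1, hi1⟩ := Function.ne_iff.mp hx
        simp only [Pi.zero_apply] at hi1
        exact Finset.sum_pos' (fun i _ => sq_nonneg _)
          ⟨i1, Finset.mem_univ _, by positivity⟩
      have hbes := aux_bessel ξ' ν x hν horth hq
      have h3 : nrm ^ 3 = q * nrm := by rw [pow_succ, hnrm2]
      have hc : (f / (4 * nrm ^ 3) * S) * S + (f / (4 * nrm) * B) * B
          = (f / (4 * nrm)) * (S ^ 2 / q + B ^ 2) := by
        rw [h3]; field_simp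
      have h4 : (f / (4 * nrm)) * (S ^ 2 / q + B ^ 2) ≤ (f / (4 * nrm)) * (∑ i, x i ^ 2) :=
        mul_le_mul_of_nonneg_left hbes (by positivity)
      have h5 : (f / (4 * nrm)) * (∑ i, x i ^ 2) < (1 / (2 * nrm)) * (∑ i, x i ^ 2) := by
        apply mul_lt_mul_of_pos_right _ hX
        rw [div_lt_div_iff₀ (by positivity) (by positivity)]
        nlinarith
      linarith
    have hPD : M.PosDef := Matrix.PosDef.of_dotProduct_mulVec_pos hherm hquad
    exact ⟨hsym, hPD, (Matrix.isUnit_iff_isUnit_det M).2 (isUnit_iff_ne_zero.2 hPD.det_pos.ne')⟩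
end
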